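/- Let w : ℕ → (0,∞), φ : ℕ → (0,∞) with M_φ := sup_{t>0} t·Σ_{n : φ(n) ≥ t} w(n) < ∞. Define the measure ν on ℕ by ν({n}) = φ(n)²·w(n). Suppose a : ℕ → ℂ satisfies |a(n)| ≤ B/φ(n) for all n (some constant B > 0). Then for every y > 0, ν{n : |a(n)| > y} ≤ 2·M_φ·B/y. -/

import Mathlib

open ENNReal MeasureTheory Set

/-- Weak type (1,1) estimate: with `ν({n}) = φ(n)²·w(n)` and `|a(n)| ≤ B/φ(n)`,
one has `ν{n : |a(n)| > y} ≤ 2·M_φ·B/y` for every `y > 0`. -/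
theorem weak_type_one_one (φ w : ℕ → ℝ) (hφ : ∀ n, 0 < φ n) (hw : ∀ n, 0 < w n)
    (M : ℝ) (hM : 0 ≤ M)
    (hMφ : ∀ t : ℝ, 0 < t →
      ENNReal.ofReal t *
        ∑' n : ℕ, Set.indicator {n : ℕ | t ≤ φ n} (fun n => ENNReal.ofReal (w n)) n ≤
        ENNReal.ofReal M)
    (a : ℕ → ℂ) (B : ℝ) (hB : 0 < B) (ha : ∀ n, ‖a n‖ ≤ B / φ n)
    (y : ℝ) (hy : 0 < y) :
    ∑' n : ℕ, Set.indicator {n : ℕ | y < ‖a n‖}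
        (fun n => ENNReal.ofReal (φ n ^ 2 * w n)) n ≤
      ENNReal.ofReal (2 * M * B / y) := by
  set T : ℝ := B / y with hTdef
  have hT : 0 < T := div_pos hB hy
  set g : ℕ → ℝ → ℝ≥0∞ := fun n t =>
    Set.indicator (Set.Iic (φ n)) (fun t => ENNReal.ofReal (2 * t * w n)) t with hg
  set f : ℕ → ℝ → ℝ≥0∞ := fun n => if y < ‖a n‖ then g n else 0 with hfdef
  have hgmeas : ∀ n, Measurable (g n) := by
    intro n
    exact Measurable.indicator (by fun_prop) measurableSet_Iic
  have hfmeas : ∀ n, Measurable (f n) := by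
    intro n
    by_cases hn : y < ‖a n‖ <;> simp only [hfdef, if_pos, if_neg, hn, if_true, if_false]
    · exact hgmeas n
    · exact measurable_const
  -- key identity for n in the set
  have key : ∀ n, y < ‖a n‖ →
      ENNReal.ofReal (φ n ^ 2 * w n) = ∫⁻ t in Set.Ioc 0 T, g n t := by
    intro n hn
    have hφT : φ n ≤ T := by
      have h1 : y < B / φ n := lt_of_lt_of_le hn (ha n)
      have h2 : y * φ n < B := (lt_div_iff₀ (hφ n)).mp h1
      have : φ n < B / y := (lt_div_iff₀ hy).mpr (by linarith)
      exact this.le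
    have hset : Set.Iic (φ n) ∩ Set.Ioc 0 T = Set.Ioc 0 (φ n) := by
      rw [Set.inter_comm, Set.Ioc_inter_Iic, min_eq_right hφT]
    show _ = ∫⁻ t in Set.Ioc 0 T, (Set.Iic (φ n)).indicator (fun t => ENNReal.ofReal (2 * t * w n)) t
    rw [lintegral_indicator measurableSet_Iic, Measure.restrict_restrict measurableSet_Iic,
      hset]
    have hcont : Continuous (fun t : ℝ => 2 * t * w n) := by continuity
    have hint : IntegrableOn (fun t : ℝ => 2 * t * w n) (Set.Ioc 0 (φ n)) :=
      hcont.integrableOn_Ioc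
    have hnn : 0 ≤ᵐ[volume.restrict (Set.Ioc 0 (φ n))] fun t : ℝ => 2 * t * w n := by
      refine (ae_restrict_iff' measurableSet_Ioc).mpr (Filter.Eventually.of_forall ?_)
      intro t ht
      exact mul_nonneg (mul_nonneg (by norm_num) ht.1.le) (hw n).le
    rw [← ofReal_integral_eq_lintegral_ofReal hint hnn]
    congr 1
    rw [← intervalIntegral.integral_of_le (hφ n).le]
    have : ∀ t : ℝ, 2 * t * w n = (2 * w n) * t := fun t => by ring
    simp only [this]
    rw [intervalIntegral.integral_const_mul, integral_id]
    ring
  calc ∑' n : ℕ, Set.indicator {n : ℕ | y < ‖a n‖}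
        (fun n => ENNReal.ofReal (φ n ^ 2 * w n)) n
      ≤ ∑' n : ℕ, ∫⁻ t in Set.Ioc 0 T, f n t := by
        refine ENNReal.tsum_le_tsum fun n => ?_
        by_cases hn : y < ‖a n‖
        · rw [Set.indicator_of_mem (show n ∈ {n : ℕ | y < ‖a n‖} from hn), hfdef]
          simp only [if_pos hn]
          exact (key n hn).le
        · rw [Set.indicator_of_notMem (show n ∉ {n : ℕ | y < ‖a n‖} from hn)]
          exact zero_le
    _ = ∫⁻ t in Set.Ioc 0 T, ∑' n : ℕ, f n t :=
        (lintegral_tsum fun n => (hfmeas n).aemeasurable).symm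
    _ ≤ ∫⁻ _ in Set.Ioc 0 T, 2 * ENNReal.ofReal M := by
        refine setLIntegral_mono measurable_const fun t ht => ?_
        have ht0 : 0 < t := ht.1
        have step : ∀ n, f n t ≤
            Set.indicator {n : ℕ | t ≤ φ n} (fun n => ENNReal.ofReal (w n)) n *
              ENNReal.ofReal (2 * t) := by
          intro n
          by_cases hn : y < ‖a n‖
          · simp only [hfdef, if_pos hn, hg]
            by_cases htn : t ≤ φ n
            · rw [Set.indicator_of_mem (show t ∈ Set.Iic (φ n) from htn),
                Set.indicator_of_mem (show n ∈ {n : ℕ | t ≤ φ n} from htn),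
                show (2 * t * w n) = w n * (2 * t) by ring,
                ENNReal.ofReal_mul (hw n).le]
            · rw [Set.indicator_of_notMem (show t ∉ Set.Iic (φ n) from htn),
                Set.indicator_of_notMem (show n ∉ {n : ℕ | t ≤ φ n} from htn), zero_mul]
          · simp only [hfdef, if_neg hn, Pi.zero_apply]
            exact zero_le
        have h0 : ENNReal.ofReal t ≠ 0 := (ENNReal.ofReal_pos.mpr ht0).ne'
        have htop : ENNReal.ofReal t ≠ ⊤ := ENNReal.ofReal_ne_top
        calc ∑' n : ℕ, f n t
            ≤ ∑' n : ℕ, Set.indicator {n : ℕ | t ≤ φ n}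
                (fun n => ENNReal.ofReal (w n)) n * ENNReal.ofReal (2 * t) :=
              ENNReal.tsum_le_tsum step
          _ = (∑' n : ℕ, Set.indicator {n : ℕ | t ≤ φ n}
                (fun n => ENNReal.ofReal (w n)) n) * ENNReal.ofReal (2 * t) :=
              ENNReal.tsum_mul_right
          _ ≤ (ENNReal.ofReal M / ENNReal.ofReal t) * ENNReal.ofReal (2 * t) := by
              refine mul_le_mul_left ?_ _
              rw [ENNReal.le_div_iff_mul_le (Or.inl h0) (Or.inl htop)]
              rw [mul_comm]
              exact hMφ t ht0
          _ = 2 * ENNReal.ofReal M := by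
              rw [show (2 : ℝ) * t = t * 2 by ring, ENNReal.ofReal_mul ht0.le,
                ENNReal.ofReal_ofNat, ← mul_assoc, ENNReal.div_mul_cancel h0 htop,
                mul_comm]
    _ ≤ ENNReal.ofReal (2 * M * B / y) := by
        rw [setLIntegral_const, Real.volume_Ioc, sub_zero]
        rw [show (2 : ℝ≥0∞) = ENNReal.ofReal 2 from (ENNReal.ofReal_ofNat 2).symm,
          ← ENNReal.ofReal_mul (by norm_num), ← ENNReal.ofReal_mul (by positivity)]
        apply ENNReal.ofReal_le_ofReal
        rw [hTdef, mul_div_assoc]
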